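/- Let τ_n = (n_1,…,n_t) with t ≥ 2 and τ = (√2 − 1)/√(t−1). Let P = [P_{jk}] ∈ ℝ^{n×n} with blocks P_{jk} ∈ ℝ^{n_j×n_k}, P_{jj} = I_{n_j}, and suppose ‖P̂_j‖_F ≤ ε for all j, where P̂_j is the j-th block column of P with its j-th block replaced by zero and 0 ≤ ε < τ. Then ‖P − I_n‖_F ≤ √t · ε. Furthermore, if W, W̃ ∈ 𝕎_{τ_n}, D̃ = diag(D̃_{11},…,D̃_{tt}) ∈ 𝔻_{τ_n}, Π ∈ ℙ_{τ_n}, and W D̃ = W̃ P Π, then D̃ is nonsingular and every singular value σ of D̃ satisfies √(1 − 2√(t−1)·ε − (t−1)·ε²) ≤ σ ≤ √(1 + 2√(t−1)·ε + (t−1)·ε²). -/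

import Mathlib

open Matrix BigOperators Kronecker
open scoped ENNReal

namespace JBD

/-- Index type for `τ_n`-block partitioned `n×n` matrices, where the partition
`τ_n = (n 0, …, n (t-1))`. -/
abbrev BlkIdx {t : ℕ} (n : Fin t → ℕ) := Σ j : Fin t, Fin (n j)

variable {t : ℕ} {n : Fin t → ℕ}

/-- The `τ_n`-block diagonal part `Bdiag_{τ_n}(A)`. -/
def bdiag (A : Matrix (BlkIdx n) (BlkIdx n) ℝ) : Matrix (BlkIdx n) (BlkIdx n) ℝ :=
  fun p q => if p.1 = q.1 then A p q else 0

/-- The `τ_n`-off-block diagonal part `OffBdiag_{τ_n}(A)`. -/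
def offBdiag (A : Matrix (BlkIdx n) (BlkIdx n) ℝ) : Matrix (BlkIdx n) (BlkIdx n) ℝ :=
  A - bdiag A

/-- `A ∈ 𝔻_{τ_n}`, i.e. `A` is `τ_n`-block diagonal. -/
def IsBlockDiag (A : Matrix (BlkIdx n) (BlkIdx n) ℝ) : Prop :=
  ∀ p q : BlkIdx n, p.1 ≠ q.1 → A p q = 0

/-- `P` is a permutation matrix. -/
def IsPermMatrix {I : Type*} [DecidableEq I] [Fintype I] (P : Matrix I I ℝ) : Prop :=
  ∃ σ : Equiv.Perm I, P = σ.permMatrix ℝ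

/-- `P ∈ ℙ_{τ_n}`: a `τ_n`-block diagonal preserving permutation matrix. -/
def IsBDPerm (P : Matrix (BlkIdx n) (BlkIdx n) ℝ) : Prop :=
  IsPermMatrix P ∧
    ∀ D : Matrix (BlkIdx n) (BlkIdx n) ℝ, IsBlockDiag D → IsBlockDiag (Pᵀ * D * P)

/-- `W ∈ 𝕎_{τ_n}`: nonsingular with `Bdiag_{τ_n}(Wᵀ W) = I`. -/
def MemW (W : Matrix (BlkIdx n) (BlkIdx n) ℝ) : Prop :=
  IsUnit W ∧ bdiag (Wᵀ * W) = 1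

/-- `W` is a `τ_n`-block diagonalizer of the matrix set `𝒜 = {A i}`. -/
def IsDiagonalizer {m : ℕ} (A : Fin m → Matrix (BlkIdx n) (BlkIdx n) ℝ)
    (W : Matrix (BlkIdx n) (BlkIdx n) ℝ) : Prop :=
  IsUnit W ∧ ∀ i, IsBlockDiag (Wᵀ * A i * W)

/-- The JBDP for `𝒜` is uniquely `τ_n`-block diagonalizable. -/
def UniquelyBD {m : ℕ} (A : Fin m → Matrix (BlkIdx n) (BlkIdx n) ℝ) : Prop :=
  (∃ W, IsDiagonalizer A W) ∧
    ∀ W W', IsDiagonalizer A W → IsDiagonalizer A W' →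
      ∃ D P : Matrix (BlkIdx n) (BlkIdx n) ℝ,
        IsBlockDiag D ∧ IsUnit D ∧ IsBDPerm P ∧ W' = W * D * P

/-- The `j`-th diagonal block of a `τ_n`-partitioned matrix. -/
def dblock (A : Matrix (BlkIdx n) (BlkIdx n) ℝ) (j : Fin t) :
    Matrix (Fin (n j)) (Fin (n j)) ℝ := fun x y => A ⟨j, x⟩ ⟨j, y⟩

/-- A family `B = {B i}` of `N×N` matrices can be (further) simultaneously block
diagonalized by congruence, with respect to some partition of `N` of cardinality `≥ 2`. -/
def CanSplit {N m : ℕ} (B : Fin m → Matrix (Fin N) (Fin N) ℝ) : Prop :=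
  ∃ (s : ℕ) (k : Fin s → ℕ), 2 ≤ s ∧ (∀ j, 0 < k j) ∧ (∑ j, k j) = N ∧
    ∃ (e : Fin N ≃ BlkIdx k) (V : Matrix (Fin N) (Fin N) ℝ), IsUnit V ∧
      ∀ i, IsBlockDiag (Matrix.reindex e e (Vᵀ * B i * V))

/-- The subspace `𝒩(ℬ) = {Z : B i * Z - Zᵀ * B i = 0 for all i}`. -/
def nSubmodule {m : ℕ} {I : Type*} [Fintype I] (B : Fin m → Matrix I I ℝ) :
    Submodule ℝ (Matrix I I ℝ) where
  carrier := {Z | ∀ i, B i * Z - Zᵀ * B i = 0}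
  add_mem' := by
    intro a b ha hb i
    have h1 := ha i
    have h2 := hb i
    have : (B i * a - aᵀ * B i) + (B i * b - bᵀ * B i) = 0 := by rw [h1, h2, add_zero]
    calc B i * (a + b) - (a + b)ᵀ * B i
        = (B i * a - aᵀ * B i) + (B i * b - bᵀ * B i) := by
          rw [Matrix.mul_add, Matrix.transpose_add, Matrix.add_mul]; abel
      _ = 0 := this
  zero_mem' := by intro i; simp
  smul_mem' := by
    intro c Z hZ i
    have h := hZ i
    calc B i * (c • Z) - (c • Z)ᵀ * B i = c • (B i * Z - Zᵀ * B i) := by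
          rw [Matrix.mul_smul, Matrix.transpose_smul, Matrix.smul_mul, smul_sub]
      _ = 0 := by rw [h, smul_zero]

/-- Frobenius norm. -/
noncomputable def frob {I J : Type*} [Fintype I] [Fintype J] (A : Matrix I J ℝ) : ℝ :=
  Real.sqrt (∑ i, ∑ j, (A i j) ^ 2)

/-- Spectral norm (operator 2-norm). -/
noncomputable def spec {I : Type*} [Fintype I] [DecidableEq I] (A : Matrix I I ℝ) : ℝ :=
  ‖Matrix.toEuclideanCLM (𝕜 := ℝ) A‖

/-- Singular values of a real matrix: square roots of the eigenvalues of `Aᵀ * A`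
(one for each column index). -/
noncomputable def sv {I J : Type*} [Fintype I] [Fintype J] [DecidableEq J]
    (A : Matrix I J ℝ) (k : J) : ℝ :=
  Real.sqrt ((show (Aᵀ * A).IsHermitian by
    simpa using Matrix.isHermitian_conjTranspose_mul_self A).eigenvalues k)

/-- The smallest singular value. -/
noncomputable def sigmaMin {I J : Type*} [Fintype I] [Fintype J] [DecidableEq J]
    (A : Matrix I J ℝ) : ℝ :=
  ⨅ k : J, sv A k

/-- The smallest nonzero singular value. -/
noncomputable def minNonzeroSV {I J : Type*} [Fintype I] [Fintype J] [DecidableEq J]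
    (A : Matrix I J ℝ) : ℝ :=
  sInf {s | (∃ k, sv A k = s) ∧ s ≠ 0}

/-- The list of singular values sorted in increasing order. -/
noncomputable def svSorted {I J : Type*} [Fintype I] [Fintype J] [DecidableEq J]
    (A : Matrix I J ℝ) : List ℝ :=
  (Finset.univ.val.map (sv A)).sort (· ≤ ·)

/-- The second smallest singular value. -/
noncomputable def secondSmallestSV {I J : Type*} [Fintype I] [Fintype J] [DecidableEq J]
    (A : Matrix I J ℝ) : ℝ :=
  (svSorted A).getD 1 0

/-- The matrix `G_{jk}` (for `j < k`), built from the diagonal blocks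
`Aj i = A_i^{(jj)}` (size `a`) and `Ak i = A_i^{(kk)}` (size `b`). -/
noncomputable def Gjk {m a b : ℕ} (Aj : Fin m → Matrix (Fin a) (Fin a) ℝ)
    (Ak : Fin m → Matrix (Fin b) (Fin b) ℝ) :
    Matrix (Fin m × ((Fin b × Fin a) ⊕ (Fin b × Fin a))) ((Fin b × Fin a) ⊕ (Fin b × Fin a)) ℝ :=
  fun r c =>
    Matrix.fromBlocks
      ((1 : Matrix (Fin b) (Fin b) ℝ) ⊗ₖ Aj r.1) ((Ak r.1)ᵀ ⊗ₖ (1 : Matrix (Fin a) (Fin a) ℝ))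
      ((1 : Matrix (Fin b) (Fin b) ℝ) ⊗ₖ (Aj r.1)ᵀ) (Ak r.1 ⊗ₖ (1 : Matrix (Fin a) (Fin a) ℝ))
      r.2 c

/-- Column-major vectorization: `vecM Z (c, r) = Z r c`. -/
def vecM {a b : ℕ} (Z : Matrix (Fin a) (Fin b) ℝ) : Fin b × Fin a → ℝ :=
  fun p => Z p.2 p.1

/-- The perfect-shuffle permutation matrix `Π_j`, satisfying
`shuffle a *ᵥ vecM Zᵀ = vecM Z`. -/
def shuffle (a : ℕ) : Matrix (Fin a × Fin a) (Fin a × Fin a) ℝ :=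
  fun p q => if q = p.swap then 1 else 0

/-- The matrix `G_{jj}`, built from the diagonal blocks `Aj i = A_i^{(jj)}` (size `a`):
its `i`-th block row is `I ⊗ Aj i - ((Aj i)ᵀ ⊗ I) * Π_j`. -/
noncomputable def Gjj {m a : ℕ} (Aj : Fin m → Matrix (Fin a) (Fin a) ℝ) :
    Matrix (Fin m × (Fin a × Fin a)) (Fin a × Fin a) ℝ :=
  fun r c =>
    ((1 : Matrix (Fin a) (Fin a) ℝ) ⊗ₖ Aj r.1
      - ((Aj r.1)ᵀ ⊗ₖ (1 : Matrix (Fin a) (Fin a) ℝ)) * shuffle a) r.2 c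

/-- The matrix `M_{jk}` from Theorem 2.1, `M_{jk} = G_{jk}ᵀ G_{jk}`. -/
noncomputable def Mjk {m a b : ℕ} (Aj : Fin m → Matrix (Fin a) (Fin a) ℝ)
    (Ak : Fin m → Matrix (Fin b) (Fin b) ℝ) :
    Matrix ((Fin b × Fin a) ⊕ (Fin b × Fin a)) ((Fin b × Fin a) ⊕ (Fin b × Fin a)) ℝ :=
  ∑ i, Matrix.fromBlocks
    ((1 : Matrix (Fin b) (Fin b) ℝ) ⊗ₖ ((Aj i)ᵀ * Aj i + Aj i * (Aj i)ᵀ))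
    (Ak i ⊗ₖ Aj i + (Ak i)ᵀ ⊗ₖ (Aj i)ᵀ)
    (Ak i ⊗ₖ Aj i + (Ak i)ᵀ ⊗ₖ (Aj i)ᵀ)
    (((Ak i)ᵀ * Ak i + Ak i * (Ak i)ᵀ) ⊗ₖ (1 : Matrix (Fin a) (Fin a) ℝ))

/-- The modulus of uniqueness `ω_uniq = min_{j<k} σ_min(G_{jk})`, in terms of the
family of diagonal blocks `Ab j i = A_i^{(jj)}`. -/
noncomputable def omegaUniq {m : ℕ}
    (Ab : ∀ j : Fin t, Fin m → Matrix (Fin (n j)) (Fin (n j)) ℝ) : ℝ :=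
  ⨅ p : {p : Fin t × Fin t // p.1 < p.2}, sigmaMin (Gjk (Ab p.1.1) (Ab p.1.2))

/-- The modulus of non-divisibility `ω_rob` (`+∞` when `τ_n = (1,…,1)`), in terms of
the family of diagonal blocks `Ab j i = A_i^{(jj)}`. -/
noncomputable def omegaRob {m : ℕ}
    (Ab : ∀ j : Fin t, Fin m → Matrix (Fin (n j)) (Fin (n j)) ℝ) : ℝ≥0∞ :=
  ⨅ (j : Fin t) (_ : 1 < n j), ENNReal.ofReal (minNonzeroSV (Gjj (Ab j)))

/-- The matrix `Γ = diag(γ_1 I_{n_1}, …, γ_t I_{n_t})`. -/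
def gmat (γ : Fin t → ℝ) : Matrix (BlkIdx n) (BlkIdx n) ℝ :=
  Matrix.diagonal (fun p => γ p.1)

/-- The gap `g = min_{j ≠ k} |γ_j - γ_k|`. -/
noncomputable def gammaGap (γ : Fin t → ℝ) : ℝ :=
  ⨅ p : {p : Fin t × Fin t // p.1 ≠ p.2}, |γ p.1.1 - γ p.1.2|

/-- The multiset of complex eigenvalues (with algebraic multiplicity) of a real
square matrix: the roots of its characteristic polynomial over `ℂ`. -/
noncomputable def eigMultiset {I : Type*} [Fintype I] [DecidableEq I]
    (Z : Matrix I I ℝ) : Multiset ℂ :=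
  (Z.map (Complex.ofReal)).charpoly.roots

/-- The `j`-th block column of `P`, with its `j`-th (diagonal) block replaced by `0`:
the matrix `P̂_j`. -/
def hatColumn (P : Matrix (BlkIdx n) (BlkIdx n) ℝ) (j : Fin t) :
    Matrix (BlkIdx n) (Fin (n j)) ℝ :=
  fun p y => if p.1 = j then 0 else P p ⟨j, y⟩



section EnAux
variable {ι κ : Type*} [Fintype ι] [Fintype κ]

/-- Euclidean norm of a finitely supported real vector. -/
noncomputable def en (u : ι → ℝ) : ℝ := Real.sqrt (∑ i, u i ^ 2)

lemma en_nonneg (u : ι → ℝ) : 0 ≤ en u := Real.sqrt_nonneg _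

lemma sum_sq_nonneg' (u : ι → ℝ) : 0 ≤ ∑ i, u i ^ 2 :=
  Finset.sum_nonneg fun _ _ => sq_nonneg _

lemma sq_en (u : ι → ℝ) : en u ^ 2 = ∑ i, u i ^ 2 := Real.sq_sqrt (sum_sq_nonneg' u)

lemma abs_dot_le (u v : ι → ℝ) : |∑ i, u i * v i| ≤ en u * en v := by
  rw [← Real.sqrt_sq_eq_abs, en, en, ← Real.sqrt_mul (sum_sq_nonneg' u)]
  exact Real.sqrt_le_sqrt (Finset.sum_mul_sq_le_sq_mul_sq _ _ _)

lemma en_add_le (u v : ι → ℝ) : en (u + v) ≤ en u + en v := by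
  have h := (abs_le.mp (abs_dot_le u v)).2
  have h2 : ∑ i, (u + v) i ^ 2 = ∑ i, u i ^ 2 + 2 * (∑ i, u i * v i) + ∑ i, v i ^ 2 := by
    rw [Finset.mul_sum, ← Finset.sum_add_distrib, ← Finset.sum_add_distrib]
    refine Finset.sum_congr rfl fun i _ => ?_
    simp only [Pi.add_apply]; ring
  have h3 : ∑ i, (u + v) i ^ 2 ≤ (en u + en v) ^ 2 := by
    rw [h2]; nlinarith [sq_en u, sq_en v, en_nonneg u, en_nonneg v]
  calc en (u + v) ≤ Real.sqrt ((en u + en v) ^ 2) := Real.sqrt_le_sqrt h3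
    _ = en u + en v := Real.sqrt_sq (add_nonneg (en_nonneg u) (en_nonneg v))

lemma en_neg (u : ι → ℝ) : en (-u) = en u := by
  unfold en; congr 1; refine Finset.sum_congr rfl fun i _ => ?_
  simp [Pi.neg_apply]

lemma sub_en_le (u v : ι → ℝ) : en u - en v ≤ en (u + v) := by
  have h := en_add_le (u + v) (-v)
  rw [en_neg, add_neg_cancel_right] at h
  linarith

lemma en_sum_le {β : Type*} (s : Finset β) (f : β → ι → ℝ) :
    en (∑ b ∈ s, f b) ≤ ∑ b ∈ s, en (f b) := by
  induction s using Finset.cons_induction with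
  | empty => simp [en]
  | cons a s ha ih =>
    rw [Finset.sum_cons, Finset.sum_cons]
    exact (en_add_le _ _).trans (by linarith)

lemma en_mulVec_le (A : Matrix ι κ ℝ) (u : κ → ℝ) : en (A *ᵥ u) ≤ frob A * en u := by
  have hb : ∀ i, (A *ᵥ u) i ^ 2 ≤ (∑ j, A i j ^ 2) * ∑ j, u j ^ 2 := fun i => by
    simpa [Matrix.mulVec, dotProduct] using
      Finset.sum_mul_sq_le_sq_mul_sq Finset.univ (fun j => A i j) u
  have h2 : ∑ i, (A *ᵥ u) i ^ 2 ≤ (∑ i, ∑ j, A i j ^ 2) * ∑ j, u j ^ 2 := by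
    rw [Finset.sum_mul]
    exact Finset.sum_le_sum fun i _ => hb i
  calc en (A *ᵥ u) ≤ Real.sqrt ((∑ i, ∑ j, A i j ^ 2) * ∑ j, u j ^ 2) := Real.sqrt_le_sqrt h2
    _ = frob A * en u := by
        rw [Real.sqrt_mul (x := ∑ i, ∑ j, A i j ^ 2) (Finset.sum_nonneg fun _ _ => sum_sq_nonneg' _)]; rfl

end EnAux

/-- Restriction of a vector to the block `j`. -/
def blk (x : BlkIdx n → ℝ) (j : Fin t) : BlkIdx n → ℝ :=
  fun p => if p.1 = j then x p else 0

lemma blk_support (x : BlkIdx n → ℝ) (j : Fin t) {p : BlkIdx n} (h : p.1 ≠ j) :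
    blk x j p = 0 := if_neg h

lemma sum_sq_blk (x : BlkIdx n → ℝ) : ∑ j, ∑ p, (blk x j p) ^ 2 = ∑ p, x p ^ 2 := by
  rw [Finset.sum_comm]
  refine Finset.sum_congr rfl fun p _ => ?_
  have h1 : ∀ j, blk x j p ^ 2 = if p.1 = j then x p ^ 2 else 0 := fun j => by
    by_cases h : p.1 = j <;> simp [blk, h]
  rw [Finset.sum_congr rfl fun j _ => h1 j, Finset.sum_ite_eq]
  simp

lemma dot_eq_dot_bdiag (X : Matrix (BlkIdx n) (BlkIdx n) ℝ) {k : Fin t} {v : BlkIdx n → ℝ}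
    (hv : ∀ p, p.1 ≠ k → v p = 0) :
    v ⬝ᵥ (X *ᵥ v) = v ⬝ᵥ (bdiag X *ᵥ v) := by
  simp only [dotProduct, Matrix.mulVec, Finset.mul_sum]
  refine Finset.sum_congr rfl fun p _ => Finset.sum_congr rfl fun q _ => ?_
  rcases eq_or_ne p.1 q.1 with h | h
  · simp [bdiag, h]
  · have h1 : v p = 0 ∨ v q = 0 := by
      rcases eq_or_ne p.1 k with hp | hp
      · exact Or.inr (hv q (hp ▸ h.symm))
      · exact Or.inl (hv p hp)
    rcases h1 with h0 | h0 <;> simp [bdiag, h, h0]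

lemma dot_bdiag_split (K : Matrix (BlkIdx n) (BlkIdx n) ℝ) (x : BlkIdx n → ℝ) :
    x ⬝ᵥ (bdiag K *ᵥ x) = ∑ j, (blk x j) ⬝ᵥ (K *ᵥ (blk x j)) := by
  simp only [dotProduct, Matrix.mulVec, Finset.mul_sum]
  rw [Finset.sum_comm (γ := Fin t)]
  refine Finset.sum_congr rfl fun p _ => ?_
  rw [Finset.sum_comm (γ := Fin t)]
  refine Finset.sum_congr rfl fun q _ => ?_
  rcases eq_or_ne p.1 q.1 with h | h
  · have h1 : ∀ j, blk x j p * (K p q * blk x j q) =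
        if p.1 = j then x p * (K p q * x q) else 0 := fun j => by
      rcases eq_or_ne p.1 j with hj | hj
      · simp [blk, hj, (h.symm.trans hj : q.1 = j)]
      · simp [blk, hj]
    rw [Finset.sum_congr rfl fun j _ => h1 j, Finset.sum_ite_eq]
    simp [bdiag, h]
  · rw [Finset.sum_eq_zero, bdiag]
    · simp [h]
    · intro j _
      rcases eq_or_ne p.1 j with hj | hj
      · have h2 : q.1 ≠ j := fun hq => h (hj.trans hq.symm)
        simp [blk, h2]
      · simp [blk, hj]

lemma bdiag_conj {D : Matrix (BlkIdx n) (BlkIdx n) ℝ} (hD : IsBlockDiag D)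
    (X : Matrix (BlkIdx n) (BlkIdx n) ℝ) :
    bdiag (Dᵀ * X * D) = Dᵀ * bdiag X * D := by
  ext p q
  rcases eq_or_ne p.1 q.1 with hpq | hpq
  · show (if p.1 = q.1 then (Dᵀ * X * D) p q else 0) = _
    rw [if_pos hpq, Matrix.mul_apply, Matrix.mul_apply]
    refine Finset.sum_congr rfl fun b _ => ?_
    rcases eq_or_ne b.1 q.1 with hb | hb
    · congr 1
      rw [Matrix.mul_apply, Matrix.mul_apply]
      refine Finset.sum_congr rfl fun a _ => ?_
      rcases eq_or_ne a.1 p.1 with ha | ha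
      · have h3 : a.1 = b.1 := by rw [ha, hpq, ← hb]
        simp [bdiag, h3]
      · simp [Matrix.transpose_apply, hD a p ha]
    · simp [hD b q hb]
  · show (if p.1 = q.1 then (Dᵀ * X * D) p q else 0) = _
    rw [if_neg hpq]
    symm
    rw [Matrix.mul_apply]
    refine Finset.sum_eq_zero fun b _ => ?_
    rcases eq_or_ne b.1 q.1 with hb | hb
    · rw [Matrix.mul_apply]
      rw [Finset.sum_eq_zero, zero_mul]
      intro a _
      rcases eq_or_ne a.1 p.1 with ha | ha
      · have h3 : a.1 ≠ b.1 := by rw [ha, hb]; exact hpq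
        simp [bdiag, h3]
      · simp [Matrix.transpose_apply, hD a p ha]
    · rw [hD b q hb, mul_zero]

lemma permMatrix_mulVec {ι : Type*} [Fintype ι] [DecidableEq ι] (σ : Equiv.Perm ι)
    (u : ι → ℝ) : (σ.permMatrix ℝ) *ᵥ u = fun i => u (σ i) := by
  funext i
  simp [Equiv.Perm.permMatrix, Matrix.mulVec, dotProduct, PEquiv.toMatrix_apply,
    Equiv.toPEquiv_apply]

lemma conj_perm {ι : Type*} [Fintype ι] [DecidableEq ι] (σ : Equiv.Perm ι)
    (X : Matrix ι ι ℝ) :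
    (σ.permMatrix ℝ)ᵀ * X * (σ.permMatrix ℝ) = X.submatrix σ.symm σ.symm := by
  have h1 : X * (σ.permMatrix ℝ) = X.submatrix id σ.symm :=
    PEquiv.mul_toMatrix_toPEquiv X σ
  have h2 : ∀ Y : Matrix ι ι ℝ, (σ.permMatrix ℝ)ᵀ * Y = Y.submatrix σ.symm id := by
    intro Y
    have h0 : ((σ.permMatrix ℝ)ᵀ * Y)ᵀ = Yᵀ * (σ.permMatrix ℝ) := by
      rw [Matrix.transpose_mul, Matrix.transpose_transpose]
    have h3 := congrArg Matrix.transpose h0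
    rw [Matrix.transpose_transpose, PEquiv.mul_toMatrix_toPEquiv,
      Matrix.transpose_submatrix, Matrix.transpose_transpose] at h3
    exact h3
  rw [Matrix.mul_assoc, h1, h2, Matrix.submatrix_submatrix]
  rfl

lemma blockmap (hn : ∀ j, 0 < n j) (σ : Equiv.Perm (BlkIdx n))
    (hσ : ∀ D : Matrix (BlkIdx n) (BlkIdx n) ℝ, IsBlockDiag D →
      IsBlockDiag ((σ.permMatrix ℝ)ᵀ * D * (σ.permMatrix ℝ))) :
    ∃ g : Fin t → Fin t, ∀ p : BlkIdx n, (σ.symm p).1 = g p.1 := by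
  have A : ∀ p q : BlkIdx n, (σ.symm p).1 = (σ.symm q).1 → p.1 = q.1 := by
    intro p q hpq
    by_contra hne
    set D : Matrix (BlkIdx n) (BlkIdx n) ℝ :=
      fun a b => if a = σ.symm p ∧ b = σ.symm q then 1 else 0 with hDdef
    have hD : IsBlockDiag D := by
      intro a b hab
      rw [hDdef]
      dsimp only
      rw [if_neg]
      rintro ⟨rfl, rfl⟩
      exact hab hpq
    have h0 := hσ D hD p q hne
    rw [conj_perm] at h0
    change (if σ.symm p = σ.symm p ∧ σ.symm q = σ.symm q then (1:ℝ) else 0) = 0 at h0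
    simp at h0
  set g : Fin t → Fin t := fun j => (σ.symm ⟨j, ⟨0, hn j⟩⟩).1 with hg
  have ginj : Function.Injective g := by
    intro j k h
    exact A ⟨j, ⟨0, hn j⟩⟩ ⟨k, ⟨0, hn k⟩⟩ h
  have gsurj : Function.Surjective g := Finite.surjective_of_injective ginj
  refine ⟨g, fun p => ?_⟩
  obtain ⟨k, hk⟩ := gsurj (σ.symm p).1
  have hkp : (⟨k, ⟨0, hn k⟩⟩ : BlkIdx n).1 = p.1 := A ⟨k, ⟨0, hn k⟩⟩ p hk
  rw [← hk]
  exact congrArg g hkp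

lemma helper1 {Wt : Matrix (BlkIdx n) (BlkIdx n) ℝ} (hWt : bdiag (Wtᵀ * Wt) = 1)
    {k : Fin t} {v : BlkIdx n → ℝ} (hv : ∀ p, p.1 ≠ k → v p = 0) :
    ∑ i, (Wt *ᵥ v) i ^ 2 = ∑ p, v p ^ 2 := by
  calc ∑ i, (Wt *ᵥ v) i ^ 2 = (Wt *ᵥ v) ⬝ᵥ (Wt *ᵥ v) := by
        simp [dotProduct, pow_two]
    _ = v ⬝ᵥ ((Wtᵀ * Wt) *ᵥ v) := by
        rw [← Matrix.mulVec_mulVec, Matrix.dotProduct_mulVec v Wtᵀ, Matrix.vecMul_transpose]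
    _ = v ⬝ᵥ (bdiag (Wtᵀ * Wt) *ᵥ v) := dot_eq_dot_bdiag _ hv
    _ = v ⬝ᵥ v := by rw [hWt, Matrix.one_mulVec]
    _ = ∑ p, v p ^ 2 := by simp [dotProduct, pow_two]

lemma helper2 {Wt : Matrix (BlkIdx n) (BlkIdx n) ℝ} (hWt : bdiag (Wtᵀ * Wt) = 1)
    (ht : 1 ≤ t) (k : Fin t) (h : BlkIdx n → ℝ) (hh : ∀ p, p.1 = k → h p = 0) :
    en (Wt *ᵥ h) ≤ Real.sqrt ((t : ℝ) - 1) * en h := by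
  set s := (Finset.univ : Finset (Fin t)).erase k with hs
  have hdec : h = ∑ l ∈ s, blk h l := by
    funext p
    rw [Finset.sum_apply]
    rcases eq_or_ne p.1 k with hp | hp
    · rw [hh p hp, Finset.sum_eq_zero]
      intro l hl
      exact blk_support h l (by rw [hp]; exact (Finset.ne_of_mem_erase hl).symm)
    · have h1 : ∀ l ∈ s, blk h l p = if p.1 = l then h p else 0 := fun l _ => rfl
      rw [Finset.sum_congr rfl h1, Finset.sum_ite_eq,
        if_pos (Finset.mem_erase.mpr ⟨hp, Finset.mem_univ _⟩)]
  have hWd : Wt *ᵥ h = ∑ l ∈ s, Wt *ᵥ blk h l := by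
    conv_lhs => rw [hdec]
    exact map_sum Wt.mulVecLin (fun l => blk h l) s
  have h1 : en (Wt *ᵥ h) ≤ ∑ l ∈ s, en (Wt *ᵥ blk h l) := hWd ▸ en_sum_le s _
  have h2 : ∀ l, en (Wt *ᵥ blk h l) = en (blk h l) := fun l => by
    unfold en; rw [helper1 hWt (fun p hp => blk_support h l hp)]
  have hcard : (s.card : ℝ) = (t : ℝ) - 1 := by
    rw [hs, Finset.card_erase_of_mem (Finset.mem_univ _), Finset.card_univ, Fintype.card_fin]
    push_cast [Nat.cast_sub ht]
    ring
  have h4 : ∑ l ∈ s, en (blk h l) ^ 2 = en h ^ 2 := by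
    have hfull : ∑ l ∈ s, en (blk h l) ^ 2 = ∑ l, en (blk h l) ^ 2 := by
      apply Finset.sum_subset (Finset.subset_univ s)
      intro l _ hl
      have hlk : l = k := by
        by_contra hne
        exact hl (Finset.mem_erase.mpr ⟨hne, Finset.mem_univ _⟩)
      subst hlk
      have hb0 : blk h l = 0 := by
        funext p
        rcases eq_or_ne p.1 l with hp | hp
        · show (if p.1 = l then h p else 0) = 0
          rw [if_pos hp, hh p hp]
        · exact blk_support h l hp
      rw [hb0, sq_en]
      simp
    rw [hfull, Finset.sum_congr rfl fun l _ => sq_en _, sum_sq_blk, ← sq_en]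
  have h3 : (∑ l ∈ s, en (blk h l)) ^ 2 ≤ ((t : ℝ) - 1) * en h ^ 2 := by
    have hcs := Finset.sum_mul_sq_le_sq_mul_sq s (fun _ => (1 : ℝ)) (fun l => en (blk h l))
    simp only [one_pow, one_mul, mul_one, Finset.sum_const, nsmul_eq_mul] at hcs
    rw [h4] at hcs
    calc (∑ l ∈ s, en (blk h l)) ^ 2 ≤ (s.card : ℝ) * en h ^ 2 := hcs
      _ = ((t : ℝ) - 1) * en h ^ 2 := by rw [hcard]
  have hS0 : (0 : ℝ) ≤ ∑ l ∈ s, en (blk h l) := Finset.sum_nonneg fun l _ => en_nonneg _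
  have hS : ∑ l ∈ s, en (blk h l) ≤ Real.sqrt ((t : ℝ) - 1) * en h := by
    calc ∑ l ∈ s, en (blk h l) = Real.sqrt ((∑ l ∈ s, en (blk h l)) ^ 2) :=
          (Real.sqrt_sq hS0).symm
      _ ≤ Real.sqrt (((t : ℝ) - 1) * en h ^ 2) := Real.sqrt_le_sqrt h3
      _ = Real.sqrt ((t : ℝ) - 1) * en h := by
          rw [Real.sqrt_mul (by
            have h5 : (1 : ℝ) ≤ (t : ℝ) := by exact_mod_cast ht
            linarith), Real.sqrt_sq (en_nonneg h)]
  calc en (Wt *ᵥ h) ≤ ∑ l ∈ s, en (Wt *ᵥ blk h l) := h1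
    _ = ∑ l ∈ s, en (blk h l) := Finset.sum_congr rfl fun l _ => h2 l
    _ ≤ Real.sqrt ((t : ℝ) - 1) * en h := hS

lemma helper3 {P : Matrix (BlkIdx n) (BlkIdx n) ℝ} (hPd : ∀ j, dblock P j = 1)
    (k : Fin t) (v : BlkIdx n → ℝ) (hv : ∀ p, p.1 ≠ k → v p = 0) :
    P *ᵥ v = v + (hatColumn P k) *ᵥ (fun y => v ⟨k, y⟩) := by
  funext p
  have hsum : (P *ᵥ v) p = ∑ y, P p ⟨k, y⟩ * v ⟨k, y⟩ := by
    show ∑ q, P p q * v q = _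
    rw [← Finset.univ_sigma_univ, Finset.sum_sigma]
    rw [Finset.sum_eq_single k]
    · intro j _ hj
      exact Finset.sum_eq_zero fun y _ => by rw [hv ⟨j, y⟩ hj, mul_zero]
    · intro hk
      exact absurd (Finset.mem_univ k) hk
  rw [Pi.add_apply, hsum]
  obtain ⟨pj, px⟩ := p
  show _ = v ⟨pj, px⟩ + ∑ y, hatColumn P k ⟨pj, px⟩ y * v ⟨k, y⟩
  by_cases hp : pj = k
  · subst hp
    have hzero : (∑ y, hatColumn P pj ⟨pj, px⟩ y * v ⟨pj, y⟩) = 0 :=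
      Finset.sum_eq_zero fun y _ => by
        rw [show hatColumn P pj ⟨pj, px⟩ y = 0 from if_pos rfl, zero_mul]
    have hP : ∀ y, P ⟨pj, px⟩ ⟨pj, y⟩ = if px = y then 1 else 0 := fun y => by
      have h0 := congrFun (congrFun (hPd pj) px) y
      rw [show dblock P pj px y = P ⟨pj, px⟩ ⟨pj, y⟩ from rfl] at h0
      rw [h0, Matrix.one_apply]
    rw [hzero, add_zero, Finset.sum_congr rfl fun y _ => by rw [hP y]]
    simp
  · have hvp : v ⟨pj, px⟩ = 0 := hv _ hp
    have hhat : ∀ y, hatColumn P k ⟨pj, px⟩ y = P ⟨pj, px⟩ ⟨k, y⟩ := fun y => if_neg hp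
    rw [hvp, zero_add]
    exact Finset.sum_congr rfl fun y _ => by rw [hhat y]

lemma hatColumn_mulVec_support {P : Matrix (BlkIdx n) (BlkIdx n) ℝ} {k : Fin t}
    (w : Fin (n k) → ℝ) : ∀ p : BlkIdx n, p.1 = k → ((hatColumn P k) *ᵥ w) p = 0 := by
  intro p hp
  show ∑ y, hatColumn P k p y * w y = 0
  exact Finset.sum_eq_zero fun y _ => by rw [show hatColumn P k p y = 0 from if_pos hp, zero_mul]

lemma sub_one_entry {P : Matrix (BlkIdx n) (BlkIdx n) ℝ} (hPd : ∀ j, dblock P j = 1)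
    (p : BlkIdx n) (j : Fin t) (y : Fin (n j)) :
    (P - 1) p ⟨j, y⟩ = hatColumn P j p y := by
  obtain ⟨pj, px⟩ := p
  by_cases hp : pj = j
  · subst hp
    have h0 := congrFun (congrFun (hPd pj) px) y
    rw [show dblock P pj px y = P ⟨pj, px⟩ ⟨pj, y⟩ from rfl, Matrix.one_apply] at h0
    have h1 : ((1 : Matrix (BlkIdx n) (BlkIdx n) ℝ)) ⟨pj, px⟩ ⟨pj, y⟩ =
        if px = y then 1 else 0 := by
      rw [Matrix.one_apply]
      congr 1
      simp [Sigma.mk.inj_iff]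
    show P ⟨pj, px⟩ ⟨pj, y⟩ - (1 : Matrix (BlkIdx n) (BlkIdx n) ℝ) ⟨pj, px⟩ ⟨pj, y⟩ = _
    rw [h0, h1, show hatColumn P pj ⟨pj, px⟩ y = 0 from if_pos rfl, sub_self]
  · have h1 : ((1 : Matrix (BlkIdx n) (BlkIdx n) ℝ)) ⟨pj, px⟩ ⟨j, y⟩ = 0 := by
      rw [Matrix.one_apply, if_neg]
      intro hc
      exact hp (congrArg Sigma.fst hc)
    show P ⟨pj, px⟩ ⟨j, y⟩ - (1 : Matrix (BlkIdx n) (BlkIdx n) ℝ) ⟨pj, px⟩ ⟨j, y⟩ = _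
    rw [h1, sub_zero, show hatColumn P j ⟨pj, px⟩ y = P ⟨pj, px⟩ ⟨j, y⟩ from if_neg hp]

lemma part1 {P : Matrix (BlkIdx n) (BlkIdx n) ℝ} (hPd : ∀ j, dblock P j = 1)
    {ε : ℝ} (hε0 : 0 ≤ ε) (hPj : ∀ j, frob (hatColumn P j) ≤ ε) :
    frob (P - 1) ≤ Real.sqrt (t : ℝ) * ε := by
  have key : ∑ p, ∑ q, ((P - 1) p q) ^ 2 ≤ (t : ℝ) * ε ^ 2 := by
    have hsplit : ∀ p : BlkIdx n, ∑ q, ((P - 1) p q) ^ 2 =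
        ∑ j, ∑ y, (hatColumn P j p y) ^ 2 := fun p => by
      rw [← Finset.univ_sigma_univ, Finset.sum_sigma]
      exact Finset.sum_congr rfl fun j _ => Finset.sum_congr rfl fun y _ => by
        rw [sub_one_entry hPd]
    rw [Finset.sum_congr rfl fun p _ => hsplit p, Finset.sum_comm]
    have hle : ∀ j, ∑ p, ∑ y, (hatColumn P j p y) ^ 2 ≤ ε ^ 2 := fun j => by
      have h1 : frob (hatColumn P j) ^ 2 ≤ ε ^ 2 :=
        pow_le_pow_left₀ (Real.sqrt_nonneg _) (hPj j) 2
      rw [frob, Real.sq_sqrt (x := ∑ p, ∑ y, (hatColumn P j p y) ^ 2) (Finset.sum_nonneg fun _ _ =>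
        Finset.sum_nonneg fun _ _ => sq_nonneg _)] at h1
      exact h1
    calc ∑ j, ∑ p, ∑ y, (hatColumn P j p y) ^ 2 ≤ ∑ _j : Fin t, ε ^ 2 :=
          Finset.sum_le_sum fun j _ => hle j
      _ = (t : ℝ) * ε ^ 2 := by rw [Finset.sum_const, Finset.card_univ, Fintype.card_fin,
            nsmul_eq_mul]
  calc frob (P - 1) ≤ Real.sqrt ((t : ℝ) * ε ^ 2) := Real.sqrt_le_sqrt key
    _ = Real.sqrt (t : ℝ) * ε := by
        rw [Real.sqrt_mul (Nat.cast_nonneg t), Real.sqrt_sq hε0]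

lemma eig_bounds {I : Type*} [Fintype I] [DecidableEq I] (Dt : Matrix I I ℝ) (α β : ℝ)
    (key : ∀ x : I → ℝ, α * (∑ p, x p ^ 2) ≤ x ⬝ᵥ ((Dtᵀ * Dt) *ᵥ x) ∧
      x ⬝ᵥ ((Dtᵀ * Dt) *ᵥ x) ≤ β * ∑ p, x p ^ 2) :
    ∀ k, α ≤ (show (Dtᵀ * Dt).IsHermitian by simpa using Matrix.isHermitian_conjTranspose_mul_self Dt).eigenvalues k ∧
      (show (Dtᵀ * Dt).IsHermitian by simpa using Matrix.isHermitian_conjTranspose_mul_self Dt).eigenvalues k ≤ β := by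
  intro k
  set hH := (show (Dtᵀ * Dt).IsHermitian by simpa using Matrix.isHermitian_conjTranspose_mul_self Dt) with hHdef
  set u : I → ℝ := ⇑(hH.eigenvectorBasis k) with hu
  have hmu : (Dtᵀ * Dt) *ᵥ u = hH.eigenvalues k • u := hH.mulVec_eigenvectorBasis k
  have hnorm : ∑ p, u p ^ 2 = 1 := by
    have h1 : ‖hH.eigenvectorBasis k‖ = 1 := hH.eigenvectorBasis.orthonormal.1 k
    rw [EuclideanSpace.norm_eq] at h1
    have h2 := congrArg (· ^ 2) h1
    simp only [one_pow] at h2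
    rw [Real.sq_sqrt (Finset.sum_nonneg fun _ _ => sq_nonneg _)] at h2
    calc ∑ p, u p ^ 2 = ∑ p, ‖u p‖ ^ 2 := by
          refine Finset.sum_congr rfl fun p _ => ?_
          rw [Real.norm_eq_abs, sq_abs]
      _ = 1 := h2
  have hq : u ⬝ᵥ ((Dtᵀ * Dt) *ᵥ u) = hH.eigenvalues k := by
    rw [hmu, dotProduct_smul, smul_eq_mul]
    have h3 : u ⬝ᵥ u = 1 := by
      rw [dotProduct]
      calc ∑ p, u p * u p = ∑ p, u p ^ 2 := Finset.sum_congr rfl fun p _ => (sq (u p)).symm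
        _ = 1 := hnorm
    rw [h3, mul_one]
  obtain ⟨h1, h2⟩ := key u
  rw [hq, hnorm, mul_one] at h1
  rw [hq, hnorm, mul_one] at h2
  exact ⟨h1, h2⟩

lemma isUnit_of_bounds {I : Type*} [Fintype I] [DecidableEq I] (Dt : Matrix I I ℝ)
    (α β : ℝ) (hα : 0 < α)
    (key : ∀ x : I → ℝ, α * (∑ p, x p ^ 2) ≤ x ⬝ᵥ ((Dtᵀ * Dt) *ᵥ x) ∧
      x ⬝ᵥ ((Dtᵀ * Dt) *ᵥ x) ≤ β * ∑ p, x p ^ 2) : IsUnit Dt := by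
  have hPD : (Dtᵀ * Dt).PosDef := by
    refine Matrix.PosDef.of_dotProduct_mulVec_pos (show (Dtᵀ * Dt).IsHermitian by simpa using Matrix.isHermitian_conjTranspose_mul_self Dt) fun x hx => ?_
    have hstar : star x = x := funext fun i => star_trivial _
    rw [hstar]
    have hpos : 0 < ∑ p, x p ^ 2 := by
      obtain ⟨i, hi⟩ := Function.ne_iff.mp hx
      refine Finset.sum_pos' (fun p _ => sq_nonneg _) ⟨i, Finset.mem_univ i, ?_⟩
      have h2 := pow_pos (abs_pos.mpr hi) 2
      rwa [sq_abs] at h2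
    calc (0 : ℝ) < α * ∑ p, x p ^ 2 := by positivity
      _ ≤ x ⬝ᵥ ((Dtᵀ * Dt) *ᵥ x) := (key x).1
  have hdet : det Dt ≠ 0 := by
    intro h0
    have h1 := hPD.det_pos
    rw [Matrix.det_mul, Matrix.det_transpose, h0, mul_zero] at h1
    exact lt_irrefl _ h1
  exact (Matrix.isUnit_iff_isUnit_det Dt).mpr (isUnit_iff_ne_zero.mpr hdet)

lemma key_bound (hn : ∀ j, 0 < n j) (ht : 2 ≤ t)
    {P Wt Dt W : Matrix (BlkIdx n) (BlkIdx n) ℝ} {σ : Equiv.Perm (BlkIdx n)}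
    (hPd : ∀ j, dblock P j = 1) {ε : ℝ} (hε0 : 0 ≤ ε)
    (hPj : ∀ j, frob (hatColumn P j) ≤ ε)
    (hW : bdiag (Wᵀ * W) = 1) (hWt : bdiag (Wtᵀ * Wt) = 1)
    (hDt : IsBlockDiag Dt)
    (hσ : ∀ D : Matrix (BlkIdx n) (BlkIdx n) ℝ, IsBlockDiag D →
      IsBlockDiag ((σ.permMatrix ℝ)ᵀ * D * (σ.permMatrix ℝ)))
    (hEq : W * Dt = Wt * P * σ.permMatrix ℝ)
    {s : ℝ} (hs : s = Real.sqrt ((t : ℝ) - 1) * ε) (hs1 : s ≤ 1) :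
    ∀ x : BlkIdx n → ℝ,
      (1 - s) ^ 2 * (∑ p, x p ^ 2) ≤ x ⬝ᵥ ((Dtᵀ * Dt) *ᵥ x) ∧
      x ⬝ᵥ ((Dtᵀ * Dt) *ᵥ x) ≤ (1 + s) ^ 2 * ∑ p, x p ^ 2 := by
  obtain ⟨g, hg⟩ := blockmap hn σ hσ
  set R := Wt * P * σ.permMatrix ℝ with hR
  have hM : Dtᵀ * Dt = bdiag (Rᵀ * R) := by
    have e1 : Rᵀ * R = Dtᵀ * (Wᵀ * W) * Dt := by
      rw [← hEq, Matrix.transpose_mul]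
      simp only [Matrix.mul_assoc]
    have e2 : Dtᵀ * bdiag (Wᵀ * W) * Dt = Dtᵀ * Dt := by rw [hW, Matrix.mul_one]
    rw [← e2, ← bdiag_conj hDt, ← e1]
  intro x
  rw [hM, dot_bdiag_split]
  have hjb : ∀ j, (1 - s) ^ 2 * (∑ p, blk x j p ^ 2) ≤
      (blk x j) ⬝ᵥ ((Rᵀ * R) *ᵥ blk x j) ∧
      (blk x j) ⬝ᵥ ((Rᵀ * R) *ᵥ blk x j) ≤ (1 + s) ^ 2 * ∑ p, blk x j p ^ 2 := by
    intro j
    set u := blk x j with hu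
    have hq : u ⬝ᵥ ((Rᵀ * R) *ᵥ u) = en (R *ᵥ u) ^ 2 := by
      rw [← Matrix.mulVec_mulVec, Matrix.dotProduct_mulVec u Rᵀ, Matrix.vecMul_transpose,
        sq_en]
      simp [dotProduct, pow_two]
    set v := (σ.permMatrix ℝ) *ᵥ u with hvdef
    have hv : v = fun i => u (σ i) := permMatrix_mulVec σ u
    set k := g j with hk
    have hvsup : ∀ p : BlkIdx n, p.1 ≠ k → v p = 0 := by
      intro p hp
      rw [hv]
      dsimp only
      apply blk_support x j
      intro hcon
      apply hp
      have h5 := hg (σ p)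
      rw [Equiv.symm_apply_apply, hcon] at h5
      exact h5
    have hvsum : ∑ p, v p ^ 2 = ∑ p, u p ^ 2 := by
      rw [hv]; exact Equiv.sum_comp σ (fun i => u i ^ 2)
    have hRu : R *ᵥ u = Wt *ᵥ (P *ᵥ v) := by
      rw [hvdef, Matrix.mulVec_mulVec, Matrix.mulVec_mulVec, hR]
    set vk : Fin (n k) → ℝ := fun y => v ⟨k, y⟩ with hvk
    have hPv : P *ᵥ v = v + (hatColumn P k) *ᵥ vk := helper3 hPd k v hvsup
    set h := (hatColumn P k) *ᵥ vk with hh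
    have hWv : ∑ i, (Wt *ᵥ v) i ^ 2 = ∑ p, v p ^ 2 := helper1 hWt hvsup
    have henWv : en (Wt *ᵥ v) = en v := by unfold en; rw [hWv]
    have hWh : en (Wt *ᵥ h) ≤ Real.sqrt ((t : ℝ) - 1) * en h :=
      helper2 hWt (le_trans one_le_two ht) k h (hatColumn_mulVec_support vk)
    have henv : en v = en u := by unfold en; rw [hvsum]
    have hhen : en h ≤ ε * en v := by
      calc en h ≤ frob (hatColumn P k) * en vk := en_mulVec_le _ _
        _ ≤ ε * en vk := mul_le_mul_of_nonneg_right (hPj k) (en_nonneg _)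
        _ ≤ ε * en v := by
            apply mul_le_mul_of_nonneg_left _ hε0
            show en vk ≤ en v
            unfold en
            apply Real.sqrt_le_sqrt
            rw [← Finset.univ_sigma_univ, Finset.sum_sigma]
            exact Finset.single_le_sum (f := fun j' => ∑ y, v ⟨j', y⟩ ^ 2)
              (fun j' _ => Finset.sum_nonneg fun y _ => sq_nonneg _) (Finset.mem_univ k)
    have hsh : en (Wt *ᵥ h) ≤ s * en v := by
      calc en (Wt *ᵥ h) ≤ Real.sqrt ((t : ℝ) - 1) * en h := hWh
        _ ≤ Real.sqrt ((t : ℝ) - 1) * (ε * en v) :=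
            mul_le_mul_of_nonneg_left hhen (Real.sqrt_nonneg _)
        _ = s * en v := by rw [hs]; ring
    have hWvh : Wt *ᵥ (P *ᵥ v) = Wt *ᵥ v + Wt *ᵥ h := by rw [hPv, Matrix.mulVec_add]
    have hup : en (R *ᵥ u) ≤ (1 + s) * en u := by
      calc en (R *ᵥ u) = en (Wt *ᵥ v + Wt *ᵥ h) := by rw [hRu, hWvh]
        _ ≤ en (Wt *ᵥ v) + en (Wt *ᵥ h) := en_add_le _ _
        _ ≤ en v + s * en v := by rw [henWv]; linarith [hsh]
        _ = (1 + s) * en u := by rw [henv]; ring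
    have hlo : (1 - s) * en u ≤ en (R *ᵥ u) := by
      calc (1 - s) * en u = en v - s * en v := by rw [henv]; ring
        _ ≤ en (Wt *ᵥ v) - en (Wt *ᵥ h) := by rw [henWv]; linarith [hsh]
        _ ≤ en (Wt *ᵥ v + Wt *ᵥ h) := sub_en_le _ _
        _ = en (R *ᵥ u) := by rw [hRu, hWvh]
    constructor
    · rw [hq]
      have h0 : 0 ≤ (1 - s) * en u := mul_nonneg (by linarith) (en_nonneg u)
      have h6 := pow_le_pow_left₀ h0 hlo 2
      calc (1 - s) ^ 2 * ∑ p, u p ^ 2 = ((1 - s) * en u) ^ 2 := by rw [mul_pow, sq_en]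
        _ ≤ en (R *ᵥ u) ^ 2 := h6
    · rw [hq]
      have h6 := pow_le_pow_left₀ (en_nonneg _) hup 2
      calc en (R *ᵥ u) ^ 2 ≤ ((1 + s) * en u) ^ 2 := h6
        _ = (1 + s) ^ 2 * ∑ p, u p ^ 2 := by rw [mul_pow, sq_en]
  constructor
  · have e3 : (1 - s) ^ 2 * (∑ p, x p ^ 2) = ∑ j, (1 - s) ^ 2 * ∑ p, blk x j p ^ 2 := by
      rw [← Finset.mul_sum, sum_sq_blk]
    rw [e3]
    exact Finset.sum_le_sum fun j _ => (hjb j).1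
  · have e3 : (1 + s) ^ 2 * (∑ p, x p ^ 2) = ∑ j, (1 + s) ^ 2 * ∑ p, blk x j p ^ 2 := by
      rw [← Finset.mul_sum, sum_sq_blk]
    rw [e3]
    exact Finset.sum_le_sum fun j _ => (hjb j).2

/-- Lemma 4.3. -/
theorem lemma_three {t : ℕ} {n : Fin t → ℕ} (ht : 2 ≤ t) (hn : ∀ j, 0 < n j)
    (τv : ℝ) (hτ : τv = (Real.sqrt 2 - 1) / Real.sqrt ((t : ℝ) - 1))
    (P : Matrix (BlkIdx n) (BlkIdx n) ℝ) (hPd : ∀ j, dblock P j = 1)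
    (ε : ℝ) (hε0 : 0 ≤ ε) (hετ : ε < τv)
    (hPj : ∀ j, frob (hatColumn P j) ≤ ε) :
    frob (P - 1) ≤ Real.sqrt (t : ℝ) * ε ∧
    ∀ (W Wt Dt Pm : Matrix (BlkIdx n) (BlkIdx n) ℝ),
      MemW W → MemW Wt → IsBlockDiag Dt → IsBDPerm Pm →
      W * Dt = Wt * P * Pm →
      IsUnit Dt ∧
        ∀ k : BlkIdx n,
          Real.sqrt (1 - 2 * Real.sqrt ((t : ℝ) - 1) * ε - ((t : ℝ) - 1) * ε ^ 2) ≤ sv Dt k ∧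
          sv Dt k ≤ Real.sqrt (1 + 2 * Real.sqrt ((t : ℝ) - 1) * ε + ((t : ℝ) - 1) * ε ^ 2) := by
  have ht0 : (2 : ℝ) ≤ (t : ℝ) := by exact_mod_cast ht
  have htm1 : (1 : ℝ) ≤ (t : ℝ) - 1 := by linarith
  have ha2 : Real.sqrt ((t : ℝ) - 1) ^ 2 = (t : ℝ) - 1 := Real.sq_sqrt (by linarith)
  have ha0 : 0 < Real.sqrt ((t : ℝ) - 1) := Real.sqrt_pos.mpr (by linarith)
  have h2sq : Real.sqrt 2 ^ 2 = 2 := Real.sq_sqrt (by norm_num)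
  have h2lt2 : Real.sqrt 2 < 2 := by nlinarith [Real.sqrt_nonneg 2]
  have hs0 : 0 ≤ Real.sqrt ((t : ℝ) - 1) * ε := mul_nonneg ha0.le hε0
  have hslt : Real.sqrt ((t : ℝ) - 1) * ε < Real.sqrt 2 - 1 := by
    calc Real.sqrt ((t : ℝ) - 1) * ε < Real.sqrt ((t : ℝ) - 1) * τv :=
          (mul_lt_mul_iff_right₀ ha0).mpr hετ
      _ = Real.sqrt 2 - 1 := by
          rw [hτ, mul_comm, div_mul_cancel₀ _ ha0.ne']
  have hs1 : Real.sqrt ((t : ℝ) - 1) * ε < 1 := by nlinarith [Real.sqrt_nonneg 2]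
  constructor
  · exact part1 hPd hε0 hPj
  · intro W Wt Dt Pm hW hWt hDt hPm hEq
    obtain ⟨σ, hPmσ⟩ := hPm.1
    subst hPmσ
    have hσ := hPm.2
    have key := key_bound hn ht hPd hε0 hPj hW.2 hWt.2 hDt hσ hEq
      (s := Real.sqrt ((t : ℝ) - 1) * ε) rfl hs1.le
    have hss : (Real.sqrt ((t : ℝ) - 1) * ε) ^ 2 = ((t : ℝ) - 1) * ε ^ 2 := by
      rw [mul_pow, ha2]
    have hαpos : 0 < (1 - Real.sqrt ((t : ℝ) - 1) * ε) ^ 2 := by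
      apply pow_pos; linarith
    refine ⟨isUnit_of_bounds Dt _ _ hαpos key, fun k => ?_⟩
    have hev := eig_bounds Dt _ _ key k
    have htε : 0 ≤ ((t : ℝ) - 1) * ε ^ 2 :=
      mul_nonneg (by linarith) (sq_nonneg ε)
    constructor
    · unfold sv
      apply Real.sqrt_le_sqrt
      nlinarith [hev.1]
    · unfold sv
      apply Real.sqrt_le_sqrt
      nlinarith [hev.2]


end JBD
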